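/- Assume that Ω^1_{R/K} is a free R-module with basis dx^1,…,dx^d. Let v = (v^a_b) be a d×d matrix over K and let V : R^coord → R^coord be a K-linear derivation that vanishes on the image of R in R^coord and satisfies V(ι(f_i)) = ι( Σ_{a,b : i(b) ≥ 1} v^a_b · ((i − e_b)(a) + 1) · f_{i − e_b + e_a} ) for every f ∈ R and every multi-index i with |i| ≥ 1. Let i_V : Ω^1_{R^coord/K} → R^coord be the unique R^coord-linear map with i_V ∘ D = V, where D is the universal derivation. Let (ω^a_i) be any family of elements of Ω^1_{R^coord/K}, indexed by 1 ≤ a ≤ d and multi-indices i, satisfying: for every f ∈ R and every multi-index k, D(ι(f_k)) + Σ_{a=1}^d Σ_{i+j=k} (j(a)+1) · ι(f_{j+e_a}) • ω^a_i = 0 (with f_0 := f and • the R^coord-module action on Ω^1_{R^coord/K}). Then i_V(ω^a_{e_b}) = − v^a_b for all a, b, and i_V(ω^a_i) = 0 whenever |i| ≠ 1. -/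

import Mathlib

namespace Paper

/-- Multi-indices: finitely supported functions `Fin d → ℕ`. -/
abbrev MIdx (d : ℕ) := Fin d →₀ ℕ

/-- The length `|i|` of a multi-index. -/
def deg {d : ℕ} (i : MIdx d) : ℕ := i.sum fun _ n => n

variable (K R : Type) [Field K] [CharZero K] [CommRing R] [Algebra K R]

/-- The defining relations of the algebra `R^𝐝`. -/
def relSet (d : ℕ) : Set (MvPolynomial (R × MIdx d) R) :=
  {p | (∃ f g : R, ∃ i : MIdx d,
          p = MvPolynomial.X (f + g, i) - MvPolynomial.X (f, i) - MvPolynomial.X (g, i)) ∨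
       (∃ f g : R, ∃ i : MIdx d,
          p = MvPolynomial.X (f * g, i) -
            ∑ q ∈ Finset.HasAntidiagonal.antidiagonal i, MvPolynomial.X (f, q.1) * MvPolynomial.X (g, q.2)) ∨
       (∃ f : R, p = MvPolynomial.X (f, (0 : MIdx d)) - MvPolynomial.C f) ∨
       (∃ (c : K) (i : MIdx d), 1 ≤ deg i ∧ p = MvPolynomial.X (algebraMap K R c, i))}

/-- The commutative `R`-algebra `R^𝐝` generated by the symbols `f_i`. -/
def Rd (d : ℕ) : Type :=
  MvPolynomial (R × MIdx d) R ⧸ Ideal.span (relSet K R d)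

noncomputable instance (d : ℕ) : CommRing (Rd K R d) := Ideal.Quotient.commRing _
noncomputable instance (d : ℕ) : Algebra R (Rd K R d) := Ideal.Quotient.algebra R
noncomputable instance (d : ℕ) : Algebra K (Rd K R d) := Ideal.Quotient.algebra K

/-- The generator `f_i` of `R^𝐝`. -/
noncomputable def gen {d : ℕ} (f : R) (i : MIdx d) : Rd K R d :=
  Ideal.Quotient.mk (Ideal.span (relSet K R d)) (MvPolynomial.X (f, i))

/-- The Taylor series `I(f) = Σ_i f_i t^i ∈ R^𝐝[[t^1,…,t^d]]`. -/
noncomputable def Ifun {d : ℕ} (f : R) : MvPowerSeries (Fin d) (Rd K R d) :=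
  fun i => gen K R f i

end Paper

namespace Paper

variable (K R : Type) [Field K] [CharZero K] [CommRing R] [Algebra K R]

lemma deg_single {d : ℕ} (c : Fin d) : deg (Finsupp.single c (1 : ℕ)) = 1 := by
  simp [deg]

/-- The determinant `det(x^a_{(b)}) ∈ R^𝐝`. -/
noncomputable def detX (d : ℕ) (x : Fin d → R) : Rd K R d :=
  Matrix.det (Matrix.of fun a c => gen K R (x a) (Finsupp.single c 1))

/-- `R^coord`: the localization of `R^𝐝` at `det(x^a_{(b)})`. -/
abbrev Rcoord (d : ℕ) (x : Fin d → R) : Type :=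
  Localization.Away (detX K R d x)

/-- The localization map `ι : R^𝐝 → R^coord`. -/
noncomputable def locMap (d : ℕ) (x : Fin d → R) : Rd K R d →+* Rcoord K R d x :=
  algebraMap _ _

end Paper

/- ### auxiliary lemmas -/

namespace Paper

variable {K R : Type} [Field K] [CharZero K] [CommRing R] [Algebra K R]

lemma deg_add {d : ℕ} (i j : MIdx d) : deg (i + j) = deg i + deg j :=
  Finsupp.sum_add_index' (fun _ => rfl) (fun _ _ _ => rfl)

lemma deg_eq_zero_iff {d : ℕ} (i : MIdx d) : deg i = 0 ↔ i = 0 := by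
  constructor
  · intro h
    ext a
    by_contra ha
    have hmem : a ∈ i.support := Finsupp.mem_support_iff.mpr (by simpa using ha)
    have := (Finset.sum_eq_zero_iff.mp h) a hmem
    simp_all
  · intro h; subst h; simp [deg]

lemma gen_zero (K R : Type) [Field K] [CharZero K] [CommRing R] [Algebra K R]
    (d : ℕ) (f : R) : gen K R f (0 : MIdx d) = algebraMap R (Rd K R d) f := by
  have hmem : (MvPolynomial.X (f, (0 : MIdx d)) - MvPolynomial.C f :
      MvPolynomial (R × MIdx d) R) ∈ Ideal.span (relSet K R d) :=
    Ideal.subset_span (Or.inr (Or.inr (Or.inl ⟨f, rfl⟩)))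
  have h0 : (Ideal.Quotient.mk (Ideal.span (relSet K R d)))
      (MvPolynomial.X (f, (0 : MIdx d)) - MvPolynomial.C f) = 0 :=
    Ideal.Quotient.eq_zero_iff_mem.mpr hmem
  rw [RingHom.map_sub, sub_eq_zero] at h0
  rw [gen, h0, ← MvPolynomial.algebraMap_eq, Ideal.Quotient.mk_algebraMap]
  rfl

lemma cancelLemma (K R : Type) [Field K] [CharZero K] [CommRing R] [Algebra K R]
    (d : ℕ) (x : Fin d → R) (u : Fin d → Rcoord K R d x)
    (h : ∀ m : Fin d,
      ∑ a : Fin d, locMap K R d x (gen K R (x m) (Finsupp.single a 1)) * u a = 0) :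
    ∀ a, u a = 0 := by
  set M : Matrix (Fin d) (Fin d) (Rcoord K R d x) :=
    Matrix.of fun m a => locMap K R d x (gen K R (x m) (Finsupp.single a 1)) with hM
  have hdet : IsUnit M.det := by
    have hd : locMap K R d x (detX K R d x) = M.det := by
      exact RingHom.map_det (locMap K R d x) (Matrix.of fun a c => gen K R (x a) (Finsupp.single c 1))
    rw [← hd]
    exact IsLocalization.Away.algebraMap_isUnit (detX K R d x)
  have hMu : M.mulVec u = 0 := by
    funext m
    simpa [Matrix.mulVec, dotProduct, hM] using h m
  have h2 : M⁻¹.mulVec (M.mulVec u) = u := by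
    rw [Matrix.mulVec_mulVec, Matrix.nonsing_inv_mul M hdet, Matrix.one_mulVec]
  rw [hMu, Matrix.mulVec_zero] at h2
  intro a
  exact (congrFun h2 a).symm

end Paper

open Paper

/-- For the derivation `V` of `R^coord` corresponding to a matrix
`v ∈ gl_d(K)` (infinitesimal `GL_d(K)`-action), the contraction `i_V` of the
connection form `ω` satisfies `i_V(ω^a_{e_b}) = −v^a_b` and `i_V(ω^a_i) = 0` for
`|i| ≠ 1`. -/
theorem statement8 (K R : Type) [Field K] [CharZero K] [CommRing R] [Algebra K R]
    (d : ℕ) (hd : 1 ≤ d) (x : Fin d → R)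
    (b : Module.Basis (Fin d) R (KaehlerDifferential K R))
    (hb : ∀ a : Fin d, b a = KaehlerDifferential.D K R (x a))
    (v : Matrix (Fin d) (Fin d) K)
    (V : Derivation K (Paper.Rcoord K R d x) (Paper.Rcoord K R d x))
    (hV0 : ∀ r : R, V (Paper.locMap K R d x (algebraMap R (Paper.Rd K R d) r)) = 0)
    (hV : ∀ (f : R) (i : Paper.MIdx d), 1 ≤ Paper.deg i →
      V (Paper.locMap K R d x (Paper.gen K R f i)) =
        Paper.locMap K R d x
          (∑ a : Fin d, ∑ c : Fin d,
            if 1 ≤ i c then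
              algebraMap R (Paper.Rd K R d) (algebraMap K R (v a c)) *
                ((((i - Finsupp.single c 1 : Paper.MIdx d) a + 1 : ℕ) : Paper.Rd K R d)) *
                Paper.gen K R f ((i - Finsupp.single c 1 : Paper.MIdx d) + Finsupp.single a 1)
            else 0))
    (iV : KaehlerDifferential K (Paper.Rcoord K R d x) →ₗ[Paper.Rcoord K R d x]
        Paper.Rcoord K R d x)
    (hiV : ∀ z : Paper.Rcoord K R d x,
      iV (KaehlerDifferential.D K (Paper.Rcoord K R d x) z) = V z)
    (ω : Fin d → Paper.MIdx d → KaehlerDifferential K (Paper.Rcoord K R d x))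
    (hω : ∀ (f : R) (k : Paper.MIdx d),
      KaehlerDifferential.D K (Paper.Rcoord K R d x)
          (Paper.locMap K R d x (Paper.gen K R f k)) +
        ∑ a : Fin d, ∑ q ∈ Finset.HasAntidiagonal.antidiagonal k,
          (((q.2 a + 1 : ℕ) : Paper.Rcoord K R d x) *
              Paper.locMap K R d x (Paper.gen K R f (q.2 + Finsupp.single a 1))) •
            ω a q.1 = 0) :
    (∀ a c : Fin d, iV (ω a (Finsupp.single c 1)) =
        - Paper.locMap K R d x (algebraMap R (Paper.Rd K R d) (algebraMap K R (v a c)))) ∧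
    (∀ (a : Fin d) (i : Paper.MIdx d), Paper.deg i ≠ 1 → iV (ω a i) = 0) := by
    classical
  set ι : Rd K R d →+* Rcoord K R d x := locMap K R d x with hι
  set T : Fin d → MIdx d → Rcoord K R d x := fun a i =>
    -∑ c : Fin d, if i = Finsupp.single c 1
      then ι (algebraMap R (Rd K R d) (algebraMap K R (v a c))) else 0 with hT
  -- Step (*): contract the connection equation with iV.
  have star : ∀ (f : R) (k : MIdx d),
      V (ι (gen K R f k)) + ∑ a : Fin d, ∑ q ∈ Finset.HasAntidiagonal.antidiagonal k,
        (((q.2 a + 1 : ℕ) : Rcoord K R d x) * ι (gen K R f (q.2 + Finsupp.single a 1)))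
          * iV (ω a q.1) = 0 := by
    intro f k
    have h := congrArg iV (hω f k)
    simp only [map_add, map_sum, map_smul, smul_eq_mul, map_zero, hiV] at h
    exact h
  have hTa : ∀ (a' : Fin d) (i : MIdx d), T a' i =
      -∑ c : Fin d, if i = Finsupp.single c 1
        then ι (algebraMap R (Rd K R d) (algebraMap K R (v a' c))) else 0 :=
    fun _ _ => rfl
  -- picking out the unique antidiagonal element with first component `single c 1`
  have hc : ∀ (k : MIdx d) (G : (MIdx d × MIdx d) → Rcoord K R d x) (c : Fin d),
      ∑ q ∈ Finset.HasAntidiagonal.antidiagonal k, (if q.1 = Finsupp.single c 1 then G q else 0)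
      = if 1 ≤ k c then G (Finsupp.single c 1, k - Finsupp.single c 1) else 0 := by
    intro k G c
    by_cases h : 1 ≤ k c
    · rw [if_pos h]
      have e0 := Finset.sum_eq_single_of_mem (s := Finset.HasAntidiagonal.antidiagonal k)
        (f := fun q => if q.1 = Finsupp.single c 1 then G q else 0)
        (Finsupp.single c 1, k - Finsupp.single c 1)
        (Finset.HasAntidiagonal.mem_antidiagonal.mpr
          (add_tsub_cancel_of_le (Finsupp.single_le_iff.mpr h))) ?uniq2
      · simpa using e0
      case uniq2 =>
        intro q hq hne
        show (if q.1 = Finsupp.single c 1 then G q else 0) = 0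
        rw [if_neg]
        intro h1
        apply hne
        have hq' : q.1 + q.2 = k := Finset.HasAntidiagonal.mem_antidiagonal.mp hq
        have h2 : q.2 = k - Finsupp.single c 1 := by
          ext bb
          have h3 := DFunLike.congr_fun hq' bb
          have h4 := DFunLike.congr_fun h1 bb
          simp only [Finsupp.coe_add, Pi.add_apply, Finsupp.add_apply] at h3
          rw [Finsupp.tsub_apply]
          omega
        rw [Prod.ext_iff]
        exact ⟨h1, h2⟩
    · rw [if_neg h]
      apply Finset.sum_eq_zero
      intro q hq
      rw [if_neg]
      intro h1
      apply h
      have hq' : q.1 + q.2 = k := Finset.HasAntidiagonal.mem_antidiagonal.mp hq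
      have h3 := DFunLike.congr_fun hq' c
      simp only [Finsupp.coe_add, Pi.add_apply, Finsupp.add_apply] at h3
      have h4 : q.1 c = 1 := by rw [h1]; simp
      omega
  -- Step (**): the equation satisfied by the target values.
  have known : ∀ (f : R) (k : MIdx d),
      V (ι (gen K R f k)) + ∑ a : Fin d, ∑ q ∈ Finset.HasAntidiagonal.antidiagonal k,
        (((q.2 a + 1 : ℕ) : Rcoord K R d x) * ι (gen K R f (q.2 + Finsupp.single a 1)))
          * T a q.1 = 0 := by
    intro f k
    have step1 : ∀ a : Fin d, ∑ q ∈ Finset.HasAntidiagonal.antidiagonal k,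
        (((q.2 a + 1 : ℕ) : Rcoord K R d x) * ι (gen K R f (q.2 + Finsupp.single a 1)))
          * T a q.1
        = -∑ c : Fin d, (if 1 ≤ k c then
            ((((k - Finsupp.single c 1 : MIdx d) a + 1 : ℕ) : Rcoord K R d x) *
              ι (gen K R f ((k - Finsupp.single c 1 : MIdx d) + Finsupp.single a 1))) *
              ι (algebraMap R (Rd K R d) (algebraMap K R (v a c))) else 0) := by
      intro a
      have e1 : ∀ q ∈ Finset.HasAntidiagonal.antidiagonal k,
          (((q.2 a + 1 : ℕ) : Rcoord K R d x) * ι (gen K R f (q.2 + Finsupp.single a 1)))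
            * T a q.1
          = -∑ c : Fin d, (if q.1 = Finsupp.single c 1 then
              (((q.2 a + 1 : ℕ) : Rcoord K R d x) * ι (gen K R f (q.2 + Finsupp.single a 1)))
                * ι (algebraMap R (Rd K R d) (algebraMap K R (v a c))) else 0) := by
        intro q _
        rw [hTa]
        have hneg : ∀ (X S : Rcoord K R d x), X * -S = -(X * S) := fun X S => by ring
        rw [hneg, neg_inj, Finset.mul_sum]
        exact Finset.sum_congr rfl fun c _ => by rw [mul_ite, mul_zero]
      rw [Finset.sum_congr rfl e1, Finset.sum_neg_distrib, neg_inj, Finset.sum_comm]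
      apply Finset.sum_congr rfl
      intro c _
      exact hc k _ c
    rw [Finset.sum_congr rfl (fun a _ => step1 a), Finset.sum_neg_distrib,
      add_neg_eq_zero]
    by_cases hk : 1 ≤ deg k
    · rw [hV f k hk]
      simp only [map_sum, apply_ite ι, map_mul, map_natCast, map_zero]
      apply Finset.sum_congr rfl
      intro a _
      apply Finset.sum_congr rfl
      intro c _
      split
      · ring
      · rfl
    · have hk0 : k = 0 := (deg_eq_zero_iff k).mp (by omega)
      subst hk0
      have hV0' : V (ι (gen K R f 0)) = 0 := by
        rw [gen_zero]; exact hV0 f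
      rw [hV0']
      symm
      apply Finset.sum_eq_zero
      intro a _
      apply Finset.sum_eq_zero
      intro c _
      rw [if_neg]
      simp
  -- Main induction
  have main : ∀ (n : ℕ) (k : MIdx d), deg k = n → ∀ a, iV (ω a k) = T a k := by
    intro n
    induction n using Nat.strong_induction_on with
    | _ n IH =>
      intro k hk
      have key : ∀ m : Fin d,
          ∑ a : Fin d, ι (gen K R (x m) (Finsupp.single a 1)) *
            (iV (ω a k) - T a k) = 0 := by
        intro m
        have h1 := star (x m) k
        have h2 := known (x m) k
        have h3 : ∑ a : Fin d, ∑ q ∈ Finset.HasAntidiagonal.antidiagonal k,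
            (((q.2 a + 1 : ℕ) : Rcoord K R d x) *
                ι (gen K R (x m) (q.2 + Finsupp.single a 1)))
              * (iV (ω a q.1) - T a q.1) = 0 := by
          simp only [mul_sub, Finset.sum_sub_distrib]
          linear_combination h1 - h2
        have h4 : ∀ a : Fin d, ∑ q ∈ Finset.HasAntidiagonal.antidiagonal k,
            (((q.2 a + 1 : ℕ) : Rcoord K R d x) *
                ι (gen K R (x m) (q.2 + Finsupp.single a 1)))
              * (iV (ω a q.1) - T a q.1)
            = ι (gen K R (x m) (Finsupp.single a 1)) * (iV (ω a k) - T a k) := by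
          intro a
          have e2 := Finset.sum_eq_single_of_mem (s := Finset.HasAntidiagonal.antidiagonal k)
            (f := fun q => (((q.2 a + 1 : ℕ) : Rcoord K R d x) *
                ι (gen K R (x m) (q.2 + Finsupp.single a 1)))
              * (iV (ω a q.1) - T a q.1))
            (k, (0 : MIdx d)) (Finset.HasAntidiagonal.mem_antidiagonal.mpr (add_zero k)) ?uniq
          · rw [e2]
            norm_num
          case uniq =>
            rintro ⟨q1, q2⟩ hq hne
            have hq' := Finset.HasAntidiagonal.mem_antidiagonal.mp hq
            have hne1 : q1 ≠ k := by
              intro h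
              apply hne
              have h5 : q2 = 0 := by
                have : k + q2 = k + 0 := by rw [add_zero]; rw [h] at hq'; exact hq'
                exact add_left_cancel this
              rw [h, h5]
            have hdlt : deg q1 < n := by
              have hsum : deg q1 + deg q2 = n := by
                rw [← deg_add, hq', hk]
              have h2pos : deg q2 ≠ 0 := by
                intro h0
                apply hne1
                have h6 := (deg_eq_zero_iff q2).mp h0
                rw [h6, add_zero] at hq'
                exact hq'
              omega
            simp only
            rw [IH (deg q1) hdlt q1 rfl a, sub_self, mul_zero]
        rw [Finset.sum_congr rfl (fun a _ => h4 a)] at h3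
        exact h3
      intro a
      have h7 := cancelLemma K R d x (fun a => iV (ω a k) - T a k) key a
      exact sub_eq_zero.mp h7
  constructor
  · intro a c
    rw [main (deg (Finsupp.single c 1)) (Finsupp.single c 1) rfl a, hTa]
    rw [neg_eq_iff_eq_neg, neg_neg]
    have heq : ∀ c' : Fin d,
        (Finsupp.single c (1 : ℕ) = Finsupp.single c' 1) ↔ c = c' := fun c' =>
      Finsupp.single_left_inj one_ne_zero
    simp only [heq]
    simp
  · intro a i hi
    rw [main (deg i) i rfl a, hTa]
    rw [neg_eq_zero]
    apply Finset.sum_eq_zero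
    intro c _
    rw [if_neg]
    intro h
    exact hi (by rw [h]; exact deg_single c)
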